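/- arXiv:1307.8083 — 3 statements merged into one kernel-verified Lean document; each statement's English description precedes it below -/
import Mathlib

section
/- Let X_1, ..., X_n be i.i.d. with X_i = Δ + E_i, E_i i.i.d. exponential with rate μ, Δ ≥ 0. Define the system usage of serving a request with an (n,k) code (all tasks starting simultaneously, remaining tasks cancelled when the k-th completes) as U = Σ_{i=1}^n min(X_i, X_(k)). Then E[U] = nΔ + k/μ. -/
open MeasureTheory ProbabilityTheory

/-- The `k`-th smallest among the values `f 0, …, f (n-1)`. -/
noncomputable def kthOrderStat {n : ℕ} (k : ℕ) (f : Fin n → ℝ) : ℝ :=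
  sInf {x : ℝ | k ≤ (Finset.univ.filter (fun i => f i ≤ x)).card}

open Finset Set Real Filter
open scoped ENNReal Topology Nat

section aux

variable {Ω : Type*} [MeasurableSpace Ω]


lemma kth_lt_iff {n k : ℕ} (hk1 : 1 ≤ k) (hkn : k ≤ n) (a : Fin n → ℝ) (t : ℝ) :
    t < kthOrderStat k a ↔ ((Finset.univ.filter (fun i => a i ≤ t)).card < k) := by
  have hn : 0 < n := lt_of_lt_of_le hk1 hkn
  have hne : (Finset.univ : Finset (Fin n)).Nonempty := by
    simpa [Finset.univ_nonempty_iff] using Fin.pos_iff_nonempty.mp hn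
  set S : Set ℝ := {x : ℝ | k ≤ (Finset.univ.filter (fun i => a i ≤ x)).card} with hS
  have hSne : S.Nonempty := by
    refine ⟨Finset.univ.sup' hne a, ?_⟩
    have : Finset.univ.filter (fun i => a i ≤ Finset.univ.sup' hne a) = Finset.univ := by
      apply Finset.filter_true_of_mem
      intro i _
      exact Finset.le_sup' a (Finset.mem_univ i)
    show k ≤ _
    rw [this, Finset.card_univ, Fintype.card_fin]
    exact hkn
  have hbdd : BddBelow S := by
    refine ⟨Finset.univ.inf' hne a, ?_⟩
    intro x hx
    have hcard : 0 < (Finset.univ.filter (fun i => a i ≤ x)).card := lt_of_lt_of_le hk1 hx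
    obtain ⟨i, hi⟩ := Finset.card_pos.mp hcard
    have hax : a i ≤ x := (Finset.mem_filter.mp hi).2
    exact le_trans (Finset.inf'_le a (Finset.mem_univ i)) hax
  constructor
  · intro h
    by_contra hc
    push_neg at hc
    have : t ∈ S := hc
    exact absurd (csInf_le hbdd this) (not_le.mpr h)
  · intro h
    have hT : (Finset.univ.filter (fun i => t < a i)).Nonempty := by
      by_contra hTe
      rw [Finset.not_nonempty_iff_eq_empty, Finset.filter_eq_empty_iff] at hTe
      have : Finset.univ.filter (fun i => a i ≤ t) = Finset.univ := by
        apply Finset.filter_true_of_mem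
        intro i _
        exact not_lt.mp (hTe (Finset.mem_univ i))
      rw [this, Finset.card_univ, Fintype.card_fin] at h
      omega
    set c := (Finset.univ.filter (fun i => t < a i)).inf' hT a with hc
    have htc : t < c := by
      rw [hc, Finset.lt_inf'_iff]
      intro i hi
      exact (Finset.mem_filter.mp hi).2
    have hlow : ∀ x ∈ S, c ≤ x := by
      intro x hx
      by_contra hxc
      push_neg at hxc
      have hsub : Finset.univ.filter (fun i => a i ≤ x) ⊆ Finset.univ.filter (fun i => a i ≤ t) := by
        intro i hi
        have hix : a i ≤ x := (Finset.mem_filter.mp hi).2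
        rcases le_or_gt (a i) t with h' | h'
        · exact Finset.mem_filter.mpr ⟨Finset.mem_univ i, h'⟩
        · have : i ∈ Finset.univ.filter (fun j => t < a j) := Finset.mem_filter.mpr ⟨Finset.mem_univ i, h'⟩
          have := Finset.inf'_le a this
          exact absurd (le_trans (hc ▸ this) hix) (not_le.mpr hxc)
      have := Finset.card_le_card hsub
      have hxS : k ≤ (Finset.univ.filter (fun i => a i ≤ x)).card := hx
      omega
    exact lt_of_lt_of_le htc (le_csInf hSne hlow)

lemma kth_nonneg {n k : ℕ} (hk1 : 1 ≤ k) (hkn : k ≤ n) (a : Fin n → ℝ) (ha : ∀ i, 0 ≤ a i) :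
    0 ≤ kthOrderStat k a := by
  by_contra h
  push_neg at h
  have h2 := (kth_lt_iff hk1 hkn a (kthOrderStat k a))
  have hemp : (Finset.univ.filter (fun i => a i ≤ kthOrderStat k a)).card < k := by
    have : Finset.univ.filter (fun i => a i ≤ kthOrderStat k a) = ∅ := by
      rw [Finset.filter_eq_empty_iff]
      intro i _
      exact not_le.mpr (lt_of_lt_of_le h (ha i))
    rw [this]
    simpa using (show 0 < k by omega)
  exact absurd (h2.mpr hemp) (lt_irrefl _)

lemma sum_min_eq_lintegral {n k : ℕ} (hk1 : 1 ≤ k) (hkn : k ≤ n) (a : Fin n → ℝ)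
    (ha : ∀ i, 0 ≤ a i) :
    ENNReal.ofReal (∑ i, min (a i) (kthOrderStat k a)) =
      ∫⁻ t in Set.Ioi (0:ℝ),
        (if (Finset.univ.filter (fun i => a i ≤ t)).card < k
          then ((Finset.univ.filter (fun i => t < a i)).card : ℝ≥0∞) else 0) := by
  set m := kthOrderStat k a with hmdef
  have hm0 : 0 ≤ m := kth_nonneg hk1 hkn a ha
  have h1 : ENNReal.ofReal (∑ i, min (a i) m) = ∑ i, ENNReal.ofReal (min (a i) m) :=
    ENNReal.ofReal_sum_of_nonneg (fun i _ => le_min (ha i) hm0)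
  have h2 : ∀ i : Fin n, ENNReal.ofReal (min (a i) m) =
      ∫⁻ t in Set.Ioi (0:ℝ), Set.indicator (Set.Iio (min (a i) m)) (fun _ => (1:ℝ≥0∞)) t := by
    intro i
    rw [lintegral_indicator measurableSet_Iio, setLIntegral_one,
      Measure.restrict_apply measurableSet_Iio, Set.Iio_inter_Ioi, Real.volume_Ioo, sub_zero]
  have h3 : ∀ t ∈ Set.Ioi (0:ℝ),
      (∑ i, Set.indicator (Set.Iio (min (a i) m)) (fun _ => (1:ℝ≥0∞)) t)
      = (if (Finset.univ.filter (fun i => a i ≤ t)).card < k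
          then ((Finset.univ.filter (fun i => t < a i)).card : ℝ≥0∞) else 0) := by
    intro t _
    by_cases htm : t < m
    · rw [if_pos ((kth_lt_iff hk1 hkn a t).mp htm)]
      have heach : ∀ i : Fin n, Set.indicator (Set.Iio (min (a i) m)) (fun _ => (1:ℝ≥0∞)) t
          = if t < a i then 1 else 0 := by
        intro i
        by_cases hta : t < a i
        · rw [Set.indicator_of_mem (by simp [Set.mem_Iio, lt_min_iff, hta, htm]), if_pos hta]
        · rw [Set.indicator_of_notMem (by simp [Set.mem_Iio, lt_min_iff]; tauto), if_neg hta]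
      rw [Finset.sum_congr rfl (fun i _ => heach i)]
      simp [Finset.sum_boole]
    · rw [if_neg (fun hcard => htm ((kth_lt_iff hk1 hkn a t).mpr hcard))]
      refine Finset.sum_eq_zero (fun i _ => ?_)
      refine Set.indicator_of_notMem ?_ _
      simp only [Set.mem_Iio, not_lt]
      exact le_trans (min_le_right _ _) (not_lt.mp htm)
  calc ENNReal.ofReal (∑ i, min (a i) m)
      = ∑ i, ∫⁻ t in Set.Ioi (0:ℝ),
          Set.indicator (Set.Iio (min (a i) m)) (fun _ => (1:ℝ≥0∞)) t := by
        rw [h1]; exact Finset.sum_congr rfl (fun i _ => h2 i)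
    _ = ∫⁻ t in Set.Ioi (0:ℝ), ∑ i, Set.indicator (Set.Iio (min (a i) m)) (fun _ => (1:ℝ≥0∞)) t := by
        rw [lintegral_finset_sum]
        exact fun i _ => measurable_const.indicator measurableSet_Iio
    _ = _ := setLIntegral_congr_fun measurableSet_Ioi h3

lemma meas_card {n : ℕ} (X : Fin n → Ω → ℝ) (hmeas : ∀ i, Measurable (X i)) (t : ℝ) :
    Measurable (fun ω => (Finset.univ.filter (fun i => X i ω ≤ t)).card) := by
  have : (fun ω => (Finset.univ.filter (fun i => X i ω ≤ t)).card)
      = fun ω => ∑ i : Fin n, if X i ω ≤ t then 1 else 0 := by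
    funext ω; rw [Finset.card_filter]
  rw [this]
  exact Finset.measurable_sum _ (fun i _ =>
    Measurable.ite (measurableSet_le (hmeas i) measurable_const) measurable_const measurable_const)

lemma meas_kth {n k : ℕ} (hk1 : 1 ≤ k) (hkn : k ≤ n) (X : Fin n → Ω → ℝ)
    (hmeas : ∀ i, Measurable (X i)) :
    Measurable (fun ω => kthOrderStat k (fun j => X j ω)) := by
  apply measurable_of_Iic
  intro x
  have : (fun ω => kthOrderStat k (fun j => X j ω)) ⁻¹' (Set.Iic x)
      = (fun ω => (Finset.univ.filter (fun i => X i ω ≤ x)).card) ⁻¹' (Set.Ici k) := by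
    ext ω
    simp only [Set.mem_preimage, Set.mem_Iic, Set.mem_Ici]
    rw [← not_lt (a := x), kth_lt_iff hk1 hkn (fun j => X j ω) x, not_lt]
  rw [this]
  exact (meas_card X hmeas x) trivial

lemma meas_joint {n k : ℕ} (X : Fin n → Ω → ℝ) (hmeas : ∀ i, Measurable (X i)) :
    Measurable (fun p : ℝ × Ω =>
      if (Finset.univ.filter (fun i => X i p.2 ≤ p.1)).card < k
        then ((Finset.univ.filter (fun i => p.1 < X i p.2)).card : ℝ≥0∞) else 0) := by
  have hC : Measurable (fun p : ℝ × Ω => (Finset.univ.filter (fun i => X i p.2 ≤ p.1)).card) := by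
    have : (fun p : ℝ × Ω => (Finset.univ.filter (fun i => X i p.2 ≤ p.1)).card)
        = fun p => ∑ i : Fin n, if X i p.2 ≤ p.1 then 1 else 0 := by
      funext p; rw [Finset.card_filter]
    rw [this]
    exact Finset.measurable_sum _ (fun i _ => Measurable.ite
      (measurableSet_le ((hmeas i).comp measurable_snd) measurable_fst)
      measurable_const measurable_const)
  have hN : Measurable (fun p : ℝ × Ω => ((Finset.univ.filter (fun i => p.1 < X i p.2)).card : ℝ≥0∞)) := by
    have : (fun p : ℝ × Ω => ((Finset.univ.filter (fun i => p.1 < X i p.2)).card : ℝ≥0∞))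
        = fun p => ∑ i : Fin n, if p.1 < X i p.2 then 1 else 0 := by
      funext p; rw [Finset.card_filter]; push_cast; rfl
    rw [this]
    exact Finset.measurable_sum _ (fun i _ => Measurable.ite
      (measurableSet_lt measurable_fst ((hmeas i).comp measurable_snd))
      measurable_const measurable_const)
  have hset : MeasurableSet {p : ℝ × Ω | (Finset.univ.filter (fun i => X i p.2 ≤ p.1)).card < k} :=
    hC (show MeasurableSet (Set.Iio k) from trivial)
  exact Measurable.ite hset hN measurable_const

lemma exp_slice (P : Measure Ω) [IsProbabilityMeasure P] {n k : ℕ}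
    (X : Fin n → Ω → ℝ) (hmeas : ∀ i, Measurable (X i))
    (hindep : iIndepFun X P) (t : ℝ) (q p : ℝ≥0∞)
    (hq : ∀ i, P (X i ⁻¹' Set.Iic t) = q) (hp : ∀ i, P (X i ⁻¹' Set.Ioi t) = p) :
    ∫⁻ ω, (if (Finset.univ.filter (fun i => X i ω ≤ t)).card < k
        then ((Finset.univ.filter (fun i => t < X i ω)).card : ℝ≥0∞) else 0) ∂P
      = ∑ j ∈ Finset.range (n+1), (n.choose j) •
          ((if j < k then ((n - j : ℕ) : ℝ≥0∞) else 0) * q ^ j * p ^ (n - j)) := by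
  classical
  set E : Finset (Fin n) → Set Ω :=
    fun S => ⋂ i, (if i ∈ S then X i ⁻¹' Set.Iic t else X i ⁻¹' Set.Ioi t) with hE
  have hEmeas : ∀ S, MeasurableSet (E S) := by
    intro S
    refine MeasurableSet.iInter (fun i => ?_)
    by_cases hiS : i ∈ S
    · simpa [hiS] using (hmeas i) measurableSet_Iic
    · simpa [hiS] using (hmeas i) measurableSet_Ioi
  have hpoint : ∀ ω, (if (Finset.univ.filter (fun i => X i ω ≤ t)).card < k
        then ((Finset.univ.filter (fun i => t < X i ω)).card : ℝ≥0∞) else 0)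
      = ∑ S ∈ (Finset.univ : Finset (Fin n)).powerset,
          (if S.card < k then ((n - S.card : ℕ) : ℝ≥0∞) else 0) *
            Set.indicator (E S) (fun _ => 1) ω := by
    intro ω
    set S₀ := Finset.univ.filter (fun i => X i ω ≤ t) with hS₀
    have hmem : ∀ S : Finset (Fin n), ω ∈ E S ↔ S = S₀ := by
      intro S
      rw [hE]
      simp only [Set.mem_iInter]
      constructor
      · intro h
        ext i
        simp only [hS₀, Finset.mem_filter, Finset.mem_univ, true_and]
        constructor
        · intro hiS
          have := h i
          rw [if_pos hiS] at this
          exact this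
        · intro hle
          by_contra hiS
          have := h i
          rw [if_neg hiS] at this
          exact absurd hle (not_le.mpr this)
      · intro h
        subst h
        intro i
        by_cases hiS : i ∈ S₀
        · rw [if_pos hiS]
          exact (Finset.mem_filter.mp hiS).2
        · rw [if_neg hiS]
          have : ¬ (X i ω ≤ t) := fun hle => hiS (Finset.mem_filter.mpr ⟨Finset.mem_univ i, hle⟩)
          exact not_le.mp this
    rw [Finset.sum_eq_single S₀]
    · have hω : ω ∈ E S₀ := (hmem S₀).mpr rfl
      rw [Set.indicator_of_mem hω, mul_one]
      have hcard : (Finset.univ.filter (fun i => t < X i ω)).card = n - S₀.card := by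
        have hsplit : S₀.card + (Finset.univ.filter (fun i => ¬ (X i ω ≤ t))).card = n := by
          rw [hS₀]
          rw [Finset.card_filter_add_card_filter_not]
          simp
        have : (Finset.univ.filter (fun i => t < X i ω))
            = (Finset.univ.filter (fun i => ¬ (X i ω ≤ t))) := by
          apply Finset.filter_congr
          intro i _
          simp [not_le]
        rw [this]
        omega
      rw [hcard, hS₀]
    · intro S _ hSne
      rw [Set.indicator_of_notMem (fun hω => hSne ((hmem S).mp hω)), mul_zero]
    · intro h
      exact absurd (Finset.mem_powerset.mpr (Finset.subset_univ S₀)) h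
  have hEmeasP : ∀ S : Finset (Fin n), P (E S) = q ^ S.card * p ^ (n - S.card) := by
    intro S
    have := hindep.meas_iInter (s := fun i => if i ∈ S then X i ⁻¹' Set.Iic t else X i ⁻¹' Set.Ioi t)
      (fun i => ?_)
    · rw [hE, this]
      have : ∀ i : Fin n, P (if i ∈ S then X i ⁻¹' Set.Iic t else X i ⁻¹' Set.Ioi t)
          = if i ∈ S then q else p := by
        intro i
        by_cases hiS : i ∈ S
        · rw [if_pos hiS, if_pos hiS, hq i]
        · rw [if_neg hiS, if_neg hiS, hp i]
      rw [Finset.prod_congr rfl (fun i _ => this i)]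
      rw [← Finset.prod_mul_prod_compl S]
      rw [Finset.prod_congr rfl (fun i hi => if_pos hi),
        Finset.prod_congr rfl (fun i hi => if_neg (Finset.mem_compl.mp hi)),
        Finset.prod_const, Finset.prod_const, Finset.card_compl, Fintype.card_fin]
    · beta_reduce
      by_cases hiS : i ∈ S
      · rw [if_pos hiS]
        exact ⟨Set.Iic t, measurableSet_Iic, rfl⟩
      · rw [if_neg hiS]
        exact ⟨Set.Ioi t, measurableSet_Ioi, rfl⟩
  calc ∫⁻ ω, (if (Finset.univ.filter (fun i => X i ω ≤ t)).card < k
        then ((Finset.univ.filter (fun i => t < X i ω)).card : ℝ≥0∞) else 0) ∂P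
      = ∫⁻ ω, ∑ S ∈ (Finset.univ : Finset (Fin n)).powerset,
          (if S.card < k then ((n - S.card : ℕ) : ℝ≥0∞) else 0) *
            Set.indicator (E S) (fun _ => 1) ω ∂P := by
        exact lintegral_congr hpoint
    _ = ∑ S ∈ (Finset.univ : Finset (Fin n)).powerset,
          (if S.card < k then ((n - S.card : ℕ) : ℝ≥0∞) else 0) * P (E S) := by
        rw [lintegral_finset_sum]
        · refine Finset.sum_congr rfl (fun S _ => ?_)
          rw [lintegral_const_mul _ (measurable_const.indicator (hEmeas S)),
            lintegral_indicator (hEmeas S), setLIntegral_one]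
        · exact fun S _ => (measurable_const.indicator (hEmeas S)).const_mul _
    _ = ∑ S ∈ (Finset.univ : Finset (Fin n)).powerset,
          ((if S.card < k then ((n - S.card : ℕ) : ℝ≥0∞) else 0) * q ^ S.card * p ^ (n - S.card)) := by
        refine Finset.sum_congr rfl (fun S _ => ?_)
        rw [hEmeasP S, mul_assoc]
    _ = ∑ j ∈ Finset.range (n+1), (n.choose j) •
          ((if j < k then ((n - j : ℕ) : ℝ≥0∞) else 0) * q ^ j * p ^ (n - j)) := by
        rw [Finset.sum_powerset_apply_card
          (fun j => (if j < k then ((n - j : ℕ) : ℝ≥0∞) else 0) * q ^ j * p ^ (n - j))]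
        simp [Finset.card_univ]

lemma int_exp_shift (Δ : ℝ) {c : ℝ} (hc : 0 < c) :
    IntegrableOn (fun t : ℝ => rexp (-(c * (t - Δ)))) (Set.Ioi Δ) ∧
      ∫ t in Set.Ioi Δ, rexp (-(c * (t - Δ))) = 1 / c := by
  have hfun : (fun t : ℝ => rexp (-(c * (t - Δ)))) = fun t => rexp (c * Δ) * rexp (-c * t) := by
    funext t
    rw [← Real.exp_add]
    ring_nf
  have hint : IntegrableOn (fun t : ℝ => rexp (-(c * (t - Δ)))) (Set.Ioi Δ) := by
    rw [hfun]
    exact (exp_neg_integrableOn_Ioi Δ hc).const_mul _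
  refine ⟨hint, ?_⟩
  have hderiv : ∀ x ∈ Set.Ici Δ, HasDerivAt (fun t : ℝ => -rexp (-(c * (t - Δ))) / c)
      (rexp (-(c * (x - Δ)))) x := by
    intro x _
    have h1 : HasDerivAt (fun t : ℝ => -(c * (t - Δ))) (-c) x := by
      have h0 : HasDerivAt (-fun y : ℝ => c * (y - Δ)) (-c) x := by
        simpa using (((hasDerivAt_id x).sub_const Δ).const_mul c).neg
      exact h0
    have h2 := (h1.exp).neg.div_const c
    simpa [hc.ne'] using h2.congr_deriv (by field_simp)
  have htends : Tendsto (fun t : ℝ => -rexp (-(c * (t - Δ))) / c) atTop (𝓝 0) := by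
    have h1 : Tendsto (fun t : ℝ => -c * t + c * Δ) atTop atBot :=
      tendsto_atBot_add_const_right _ _ (tendsto_id.const_mul_atTop_of_neg (by linarith))
    have h2 : Tendsto (fun t : ℝ => -(c * (t - Δ))) atTop atBot := by
      refine h1.congr (fun t => by ring)
    have h3 := ((Real.tendsto_exp_atBot.comp h2).neg.div_const c)
    simpa using h3
  have := integral_Ioi_of_hasDerivAt_of_tendsto' hderiv hint htends
  rw [this]
  rw [sub_self, mul_zero, neg_zero, Real.exp_zero, zero_sub, neg_div, neg_neg, one_div]

lemma keyJ (Δ : ℝ) {b : ℝ} (hb : 0 < b) (j : ℕ) :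
    ∀ (c : ℝ), 0 < c →
      IntegrableOn (fun t : ℝ => (1 - rexp (-(b * (t - Δ))))^j * rexp (-(c * b * (t - Δ))))
        (Set.Ioi Δ) ∧
      ∫ t in Set.Ioi Δ, (1 - rexp (-(b * (t - Δ))))^j * rexp (-(c * b * (t - Δ)))
        = (j ! : ℝ) / (b * ∏ i ∈ Finset.range (j+1), (c + i)) := by
  induction j with
  | zero =>
    intro c hc
    have h := int_exp_shift Δ (mul_pos hc hb)
    have hfun : (fun t : ℝ => (1 - rexp (-(b * (t - Δ))))^0 * rexp (-(c * b * (t - Δ))))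
        = fun t : ℝ => rexp (-(c * b * (t - Δ))) := by
      funext t; rw [pow_zero, one_mul]
    constructor
    · rw [hfun]; exact h.1
    · rw [hfun]
      rw [h.2]
      norm_num
      rw [mul_comm]
  | succ j ih =>
    intro c hc
    have hc1 : (0:ℝ) < c + 1 := by linarith
    have hpt : (fun t : ℝ => (1 - rexp (-(b * (t - Δ))))^(j+1) * rexp (-(c * b * (t - Δ))))
        = fun t : ℝ => (1 - rexp (-(b * (t - Δ))))^j * rexp (-(c * b * (t - Δ)))
          - (1 - rexp (-(b * (t - Δ))))^j * rexp (-((c+1) * b * (t - Δ))) := by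
      funext t
      have he : rexp (-((c+1) * b * (t - Δ))) = rexp (-(c * b * (t - Δ))) * rexp (-(b * (t - Δ))) := by
        rw [← Real.exp_add]; ring_nf
      rw [pow_succ, he]; ring
    obtain ⟨hint1, hval1⟩ := ih c hc
    obtain ⟨hint2, hval2⟩ := ih (c+1) hc1
    refine ⟨by rw [hpt]; exact hint1.sub hint2, ?_⟩
    rw [hpt, integral_sub hint1 hint2, hval1, hval2]
    set A := ∏ i ∈ Finset.range (j+1), (c + (i:ℝ)) with hA
    set B := ∏ i ∈ Finset.range (j+1), (c + 1 + (i:ℝ)) with hB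
    have hApos : 0 < A := Finset.prod_pos (fun i _ => by positivity)
    have hBpos : 0 < B := Finset.prod_pos (fun i _ => by positivity)
    have hC1 : ∏ i ∈ Finset.range (j+2), (c + (i:ℝ)) = A * (c + (j:ℝ) + 1) := by
      rw [Finset.prod_range_succ, hA]
      push_cast
      ring
    have hC2 : ∏ i ∈ Finset.range (j+2), (c + (i:ℝ)) = c * B := by
      rw [Finset.prod_range_succ']
      simp only [Nat.cast_zero, add_zero]
      rw [mul_comm, hB]
      congr 1
      refine Finset.prod_congr rfl (fun i _ => ?_)
      push_cast
      ring
    have key : A * (c + (j:ℝ) + 1) = c * B := by rw [← hC1, ← hC2]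
    rw [hC1]
    have hfact : ((j+1)! : ℝ) = ((j:ℝ) + 1) * (j ! : ℝ) := by
      rw [Nat.factorial_succ]; push_cast; ring
    rw [hfact]
    field_simp
    linear_combination -key

lemma expMeasure_eq_withDensity (μ : ℝ) :
    expMeasure μ = volume.withDensity (exponentialPDF μ) := rfl

lemma law_Iic (P : Measure Ω) {Δ μ : ℝ} (hμ : 0 < μ) {X : Ω → ℝ} (hX : Measurable X)
    (hlaw : Measure.map X P = Measure.map (fun x => Δ + x) (expMeasure μ)) (t : ℝ) :
    P (X ⁻¹' Set.Iic t) = ENNReal.ofReal (if 0 ≤ t - Δ then 1 - rexp (-(μ * (t - Δ))) else 0) := by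
  have h1 : P (X ⁻¹' Set.Iic t) = Measure.map X P (Set.Iic t) :=
    (Measure.map_apply hX measurableSet_Iic).symm
  rw [h1, hlaw, Measure.map_apply (measurable_const_add Δ) measurableSet_Iic]
  have hpre : (fun x => Δ + x) ⁻¹' Set.Iic t = Set.Iic (t - Δ) := by
    ext x; simp [Set.mem_Iic]
  rw [hpre, expMeasure_eq_withDensity, withDensity_apply _ measurableSet_Iic]
  exact lintegral_exponentialPDF_eq_antiDeriv hμ (t - Δ)

lemma law_Ioi (P : Measure Ω) [IsProbabilityMeasure P] {Δ μ : ℝ} (hμ : 0 < μ) {X : Ω → ℝ} (hX : Measurable X)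
    (hlaw : Measure.map X P = Measure.map (fun x => Δ + x) (expMeasure μ)) (t : ℝ) :
    P (X ⁻¹' Set.Ioi t) = ENNReal.ofReal (if 0 ≤ t - Δ then rexp (-(μ * (t - Δ))) else 1) := by
  have hc : X ⁻¹' Set.Ioi t = (X ⁻¹' Set.Iic t)ᶜ := by
    ext ω; simp [Set.mem_Ioi, Set.mem_Iic, not_le]
  rw [hc, measure_compl (hX measurableSet_Iic) (measure_ne_top P _), law_Iic P hμ hX hlaw t]
  rw [measure_univ]
  split_ifs with h
  · have he : rexp (-(μ * (t - Δ))) ≤ 1 := by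
      rw [Real.exp_le_one_iff]
      have : 0 ≤ μ * (t - Δ) := mul_nonneg hμ.le h
      linarith
    rw [← ENNReal.ofReal_one, ← ENNReal.ofReal_sub _ (by linarith [Real.exp_pos (-(μ * (t - Δ)))])]
    norm_num
  · simp

lemma law_neg (P : Measure Ω) {Δ μ : ℝ} (hΔ : 0 ≤ Δ) {X : Ω → ℝ} (hX : Measurable X)
    (hlaw : Measure.map X P = Measure.map (fun x => Δ + x) (expMeasure μ)) :
    P (X ⁻¹' Set.Iio 0) = 0 := by
  have h1 : P (X ⁻¹' Set.Iio 0) = Measure.map X P (Set.Iio 0) :=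
    (Measure.map_apply hX measurableSet_Iio).symm
  rw [h1, hlaw, Measure.map_apply (measurable_const_add Δ) measurableSet_Iio]
  have hpre : (fun x => Δ + x) ⁻¹' Set.Iio 0 = Set.Iio (-Δ) := by
    ext x; simp [Set.mem_Iio]
  rw [hpre, expMeasure_eq_withDensity, withDensity_apply _ measurableSet_Iio]
  exact lintegral_exponentialPDF_of_nonpos (by linarith)

lemma nat_key {n j : ℕ} (hjn : j < n) :
    n.choose j * (n - j) * j ! = ∏ i ∈ Finset.range (j+1), (n - j + i) := by
  have h1 : ∏ i ∈ Finset.range (j+1), (n - j + i) = ∏ i ∈ Finset.Ico (n-j) (n+1), i := by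
    rw [Finset.prod_Ico_eq_prod_range]
    have : n + 1 - (n - j) = j + 1 := by omega
    rw [this]
  have h4 : ∏ i ∈ Finset.Ico 1 (n-j), i = (n - j - 1)! := by
    have h : n - j = (n - j - 1) + 1 := by omega
    rw [h, Finset.prod_Ico_id_eq_factorial]
    simp
  have h3 : (∏ i ∈ Finset.Ico 1 (n-j), i) * (∏ i ∈ Finset.Ico (n-j) (n+1), i)
      = ∏ i ∈ Finset.Ico 1 (n+1), i :=
    Finset.prod_Ico_consecutive _ (by omega) (by omega)
  have h2 : (∏ i ∈ Finset.Ico 1 (n+1), i) = n ! := Finset.prod_Ico_id_eq_factorial n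
  have hfac : (n - j)! = (n - j) * (n - j - 1)! := by
    have h : n - j = (n - j - 1) + 1 := by omega
    conv_lhs => rw [h, Nat.factorial_succ]
    congr 1
    omega
  have hcf : n.choose j * j ! * (n - j)! = n ! := Nat.choose_mul_factorial_mul_factorial hjn.le
  have key : (n.choose j * (n - j) * j !) * (n - j - 1)! = (∏ i ∈ Finset.range (j+1), (n - j + i)) * (n - j - 1)! := by
    rw [h1]
    calc n.choose j * (n - j) * j ! * (n - j - 1)!
        = n.choose j * j ! * ((n - j) * (n - j - 1)!) := by ring
      _ = n.choose j * j ! * (n - j)! := by rw [← hfac]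
      _ = n ! := hcf
      _ = (∏ i ∈ Finset.Ico 1 (n-j), i) * (∏ i ∈ Finset.Ico (n-j) (n+1), i) := by rw [h3, h2]
      _ = (∏ i ∈ Finset.Ico (n-j) (n+1), i) * (n - j - 1)! := by rw [h4]; ring
  exact Nat.eq_of_mul_eq_mul_right (Nat.factorial_pos _) key

end aux

/-- For i.i.d. shifted-exponential task delays, the expected system usage
`U = ∑_i min(X_i, X_(k))` (all tasks starting together, cancellation at the
`k`-th completion) equals `nΔ + k/μ`. -/
theorem expected_system_usage_shifted_exponential
    {Ω : Type*} [MeasurableSpace Ω] (P : Measure Ω) [IsProbabilityMeasure P]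
    (n k : ℕ) (hk1 : 1 ≤ k) (hkn : k ≤ n)
    (Δ μ : ℝ) (hΔ : 0 ≤ Δ) (hμ : 0 < μ)
    (X : Fin n → Ω → ℝ) (hmeas : ∀ i, Measurable (X i))
    (hindep : iIndepFun X P)
    (hlaw : ∀ i, Measure.map (X i) P = Measure.map (fun x => Δ + x) (expMeasure μ)) :
    ∫ ω, ∑ i : Fin n, min (X i ω) (kthOrderStat k (fun j => X j ω)) ∂P =
      (n : ℝ) * Δ + (k : ℝ) / μ := by
  classical
  have hn1 : 1 ≤ n := le_trans hk1 hkn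
  -- almost surely all X i are nonnegative
  have hae : ∀ᵐ ω ∂P, ∀ i, 0 ≤ X i ω := by
    rw [ae_all_iff]
    intro i
    have h0 : P (X i ⁻¹' Set.Iio 0) = 0 := law_neg P hΔ (hmeas i) (hlaw i)
    rw [ae_iff]
    simpa [Set.preimage, not_le] using h0
  have hmmeas : Measurable (fun ω => kthOrderStat k (fun j => X j ω)) :=
    meas_kth hk1 hkn X hmeas
  have hUmeas : Measurable (fun ω => ∑ i : Fin n, min (X i ω) (kthOrderStat k (fun j => X j ω))) :=
    Finset.measurable_sum _ (fun i _ => (hmeas i).min hmmeas)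
  have hUnn : 0 ≤ᵐ[P] (fun ω => ∑ i : Fin n, min (X i ω) (kthOrderStat k (fun j => X j ω))) := by
    filter_upwards [hae] with ω hω
    exact Finset.sum_nonneg (fun i _ => le_min (hω i) (kth_nonneg hk1 hkn _ hω))
  rw [integral_eq_lintegral_of_nonneg_ae hUnn hUmeas.aestronglyMeasurable]
  set F : ℝ × Ω → ℝ≥0∞ := fun pr =>
      if (Finset.univ.filter (fun i => X i pr.2 ≤ pr.1)).card < k
        then ((Finset.univ.filter (fun i => pr.1 < X i pr.2)).card : ℝ≥0∞) else 0 with hF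
  have hFmeas : Measurable F := meas_joint X hmeas
  have step4 : ∫⁻ ω, ENNReal.ofReal (∑ i : Fin n, min (X i ω) (kthOrderStat k (fun j => X j ω))) ∂P
      = ∫⁻ ω, (∫⁻ t in Set.Ioi (0:ℝ), F (t, ω)) ∂P := by
    refine lintegral_congr_ae ?_
    filter_upwards [hae] with ω hω
    exact sum_min_eq_lintegral hk1 hkn (fun i => X i ω) hω
  have step5 : ∫⁻ ω, (∫⁻ t in Set.Ioi (0:ℝ), F (t, ω)) ∂P
      = ∫⁻ t in Set.Ioi (0:ℝ), ∫⁻ ω, F (t, ω) ∂P :=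
    lintegral_lintegral_swap (f := fun ω t => F (t, ω)) ((hFmeas.comp measurable_swap).aemeasurable)
  set q : ℝ → ℝ≥0∞ :=
    fun t => ENNReal.ofReal (if 0 ≤ t - Δ then 1 - rexp (-(μ * (t - Δ))) else 0) with hqdef
  set p : ℝ → ℝ≥0∞ :=
    fun t => ENNReal.ofReal (if 0 ≤ t - Δ then rexp (-(μ * (t - Δ))) else 1) with hpdef
  have step6 : ∀ t : ℝ, ∫⁻ ω, F (t, ω) ∂P
      = ∑ j ∈ Finset.range k,
          (n.choose j : ℝ≥0∞) * (((n - j : ℕ) : ℝ≥0∞) * q t ^ j * p t ^ (n - j)) := by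
    intro t
    rw [hF]
    rw [exp_slice P X hmeas hindep t (q t) (p t) (fun i => law_Iic P hμ (hmeas i) (hlaw i) t)
      (fun i => law_Ioi P hμ (hmeas i) (hlaw i) t)]
    rw [← Finset.sum_subset (Finset.range_subset_range.mpr (by omega : k ≤ n + 1))
      (fun j _ hj => by
        rw [if_neg (by simpa using hj), zero_mul, zero_mul, smul_zero])]
    refine Finset.sum_congr rfl (fun j hj => ?_)
    rw [if_pos (Finset.mem_range.mp hj), nsmul_eq_mul]
  rw [step4, step5, lintegral_congr_ae (ae_restrict_of_ae (ae_of_all _ step6))]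
  -- split the time integral at Δ
  rw [← Set.Ioc_union_Ioi_eq_Ioi hΔ, lintegral_union measurableSet_Ioi (Set.Ioc_disjoint_Ioi le_rfl)]
  have hA : ∫⁻ t in Set.Ioc (0:ℝ) Δ, ∑ j ∈ Finset.range k,
        (n.choose j : ℝ≥0∞) * (((n - j : ℕ) : ℝ≥0∞) * q t ^ j * p t ^ (n - j))
      = (n : ℝ≥0∞) * ENNReal.ofReal Δ := by
    have hHconst : ∀ t ∈ Set.Ioc (0:ℝ) Δ, ∑ j ∈ Finset.range k,
        (n.choose j : ℝ≥0∞) * (((n - j : ℕ) : ℝ≥0∞) * q t ^ j * p t ^ (n - j)) = (n : ℝ≥0∞) := by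
      intro t ht
      have hq0 : q t = 0 := by
        rw [hqdef]
        by_cases h : 0 ≤ t - Δ
        · have : t - Δ = 0 := le_antisymm (by linarith [ht.2]) h
          simp [h, this]
        · simp [h]
      have hp1 : p t = 1 := by
        rw [hpdef]
        by_cases h : 0 ≤ t - Δ
        · have : t - Δ = 0 := le_antisymm (by linarith [ht.2]) h
          simp [h, this]
        · simp [h]
      rw [Finset.sum_eq_single_of_mem 0 (Finset.mem_range.mpr hk1)]
      · simp [hq0, hp1]
      · intro j _ hj0
        rw [hq0, zero_pow hj0]
        ring
    rw [setLIntegral_congr_fun measurableSet_Ioc hHconst, setLIntegral_const,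
      Real.volume_Ioc, sub_zero]
  have hB : ∫⁻ t in Set.Ioi Δ, ∑ j ∈ Finset.range k,
        (n.choose j : ℝ≥0∞) * (((n - j : ℕ) : ℝ≥0∞) * q t ^ j * p t ^ (n - j))
      = ENNReal.ofReal ((k : ℝ) / μ) := by
    have hHcong : ∀ t ∈ Set.Ioi Δ, ∑ j ∈ Finset.range k,
        (n.choose j : ℝ≥0∞) * (((n - j : ℕ) : ℝ≥0∞) * q t ^ j * p t ^ (n - j))
        = ∑ j ∈ Finset.range k, (n.choose j : ℝ≥0∞) * ((n - j : ℕ) : ℝ≥0∞) *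
            ENNReal.ofReal ((1 - rexp (-(μ * (t - Δ)))) ^ j *
              rexp (-(((n - j : ℕ) : ℝ) * μ * (t - Δ)))) := by
      intro t ht
      have htΔ : 0 ≤ t - Δ := by
        have := Set.mem_Ioi.mp ht; linarith
      have hele : rexp (-(μ * (t - Δ))) ≤ 1 := by
        rw [Real.exp_le_one_iff]
        nlinarith
      have hq : q t = ENNReal.ofReal (1 - rexp (-(μ * (t - Δ)))) := by rw [hqdef]; simp [htΔ]
      have hp : p t = ENNReal.ofReal (rexp (-(μ * (t - Δ)))) := by rw [hpdef]; simp [htΔ]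
      refine Finset.sum_congr rfl (fun j _ => ?_)
      rw [hq, hp, ← ENNReal.ofReal_pow (by linarith), ← ENNReal.ofReal_pow (Real.exp_nonneg _),
        mul_assoc (((n - j : ℕ) : ℝ≥0∞)),
        ← ENNReal.ofReal_mul (pow_nonneg (by linarith) j), ← mul_assoc]
      congr 2
      rw [← Real.exp_nat_mul]
      congr 1
      ring
    rw [setLIntegral_congr_fun measurableSet_Ioi hHcong]
    rw [lintegral_finset_sum]
    swap
    · intro j _
      refine Measurable.const_mul ?_ _
      refine ENNReal.continuous_ofReal.measurable.comp ?_
      refine Measurable.mul ?_ ?_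
      · exact ((continuous_const.sub (((continuous_const.mul
          ((continuous_id.sub continuous_const))).neg).rexp)).pow j).measurable
      · exact (((continuous_const.mul ((continuous_id.sub continuous_const))).neg).rexp).measurable
    have hterm : ∀ j ∈ Finset.range k,
        ∫⁻ t in Set.Ioi Δ, (n.choose j : ℝ≥0∞) * ((n - j : ℕ) : ℝ≥0∞) *
            ENNReal.ofReal ((1 - rexp (-(μ * (t - Δ)))) ^ j *
              rexp (-(((n - j : ℕ) : ℝ) * μ * (t - Δ))))
          = ENNReal.ofReal (1 / μ) := by
      intro j hj
      have hjk : j < k := Finset.mem_range.mp hj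
      have hjn : j < n := lt_of_lt_of_le hjk hkn
      have hcpos : (0:ℝ) < ((n - j : ℕ) : ℝ) := by
        have : 0 < n - j := by omega
        exact_mod_cast this
      obtain ⟨hint, hval⟩ := keyJ Δ hμ j ((n - j : ℕ) : ℝ) hcpos
      rw [lintegral_const_mul]
      swap
      · refine ENNReal.continuous_ofReal.measurable.comp ?_
        refine Measurable.mul ?_ ?_
        · exact ((continuous_const.sub (((continuous_const.mul
            ((continuous_id.sub continuous_const))).neg).rexp)).pow j).measurable
        · exact (((continuous_const.mul ((continuous_id.sub continuous_const))).neg).rexp).measurable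
      have hnn : 0 ≤ᵐ[volume.restrict (Set.Ioi Δ)]
          (fun t => (1 - rexp (-(μ * (t - Δ)))) ^ j * rexp (-(((n - j : ℕ) : ℝ) * μ * (t - Δ)))) := by
        refine (ae_restrict_iff' measurableSet_Ioi).mpr (ae_of_all _ (fun t ht => ?_))
        have htΔ : 0 ≤ t - Δ := by have := Set.mem_Ioi.mp ht; linarith
        have hele : rexp (-(μ * (t - Δ))) ≤ 1 := by
          rw [Real.exp_le_one_iff]; nlinarith
        exact mul_nonneg (pow_nonneg (by linarith) j) (Real.exp_nonneg _)
      have harg : ∀ t : ℝ, -(((n - j : ℕ) : ℝ) * μ * (t - Δ)) = -(((n - j : ℕ) : ℝ) * μ * (t - Δ)) := fun _ => rfl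
      have hlint : ∫⁻ t in Set.Ioi Δ, ENNReal.ofReal ((1 - rexp (-(μ * (t - Δ)))) ^ j *
            rexp (-(((n - j : ℕ) : ℝ) * μ * (t - Δ))))
          = ENNReal.ofReal ((j ! : ℝ) / (μ * ∏ i ∈ Finset.range (j+1), (((n - j : ℕ) : ℝ) + i))) := by
        rw [← ofReal_integral_eq_lintegral_ofReal hint hnn, hval]
      rw [hlint]
      -- now the arithmetic
      have hD : (∏ i ∈ Finset.range (j+1), (((n - j : ℕ) : ℝ) + i))
          = ((∏ i ∈ Finset.range (j+1), (n - j + i) : ℕ) : ℝ) := by push_cast; rfl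
      have hDkey : ((∏ i ∈ Finset.range (j+1), (n - j + i) : ℕ) : ℝ)
          = ((n.choose j : ℕ) : ℝ) * ((n - j : ℕ) : ℝ) * ((j ! : ℕ) : ℝ) := by
        rw [← nat_key hjn]; push_cast; ring
      rw [← ENNReal.ofReal_natCast (n.choose j), ← ENNReal.ofReal_natCast (n - j),
        ← ENNReal.ofReal_mul (by positivity), ← ENNReal.ofReal_mul (by positivity)]
      congr 1
      rw [hD, hDkey]
      have h1 : (0:ℝ) < ((n.choose j : ℕ) : ℝ) := by
        exact_mod_cast Nat.choose_pos hjn.le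
      have h2 : (0:ℝ) < ((j ! : ℕ) : ℝ) := by exact_mod_cast Nat.factorial_pos j
      field_simp
    rw [Finset.sum_congr rfl hterm, Finset.sum_const, Finset.card_range, nsmul_eq_mul,
      ← ENNReal.ofReal_natCast k, ← ENNReal.ofReal_mul (Nat.cast_nonneg k)]
    congr 1
    field_simp
  rw [hA, hB]
  rw [← ENNReal.ofReal_natCast n, ← ENNReal.ofReal_mul (Nat.cast_nonneg n),
    ← ENNReal.ofReal_add (by positivity) (by positivity)]
  rw [ENNReal.toReal_ofReal (by positivity)]
end

section
/- Fix positive constants Δ^f, Δ^e, Δ^l, Δ^g and J > 0. The function g(r) = J·r(r−1)/(Δ^f r + Δ^e) · (Δ^l + Δ^g ln(r/(r−1))) is strictly increasing in r on (1, ∞), tends to 0 as r → 1⁺, and tends to ∞ as r → ∞. -/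
open Set Filter

private lemma rhs_hasDerivAt (Δf Δe Δl Δg J : ℝ) (hf : 0 < Δf) (he : 0 < Δe)
    {x : ℝ} (hx : 1 < x) :
    HasDerivAt (fun r : ℝ => J * (r * (r - 1)) / (Δf * r + Δe)
        * (Δl + Δg * Real.log (r / (r - 1))))
      (J / (Δf * x + Δe) ^ 2 *
        ((Δf * x ^ 2 + 2 * Δe * x - Δe) * (Δl + Δg * Real.log (x / (x - 1)))
          - Δg * (Δf * x + Δe))) x := by
  have hx0 : (0:ℝ) < x := lt_trans one_pos hx
  have hx1 : (0:ℝ) < x - 1 := by linarith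
  have hv : (0:ℝ) < Δf * x + Δe := by positivity
  have hy : x / (x - 1) ≠ 0 := div_ne_zero hx0.ne' hx1.ne'
  have h1 : HasDerivAt (fun r : ℝ => J * (r * (r - 1))) (J * (1 * (x - 1) + x * 1)) x :=
    ((hasDerivAt_id x).mul ((hasDerivAt_id x).sub_const 1)).const_mul J
  have h2 : HasDerivAt (fun r : ℝ => Δf * r + Δe) (Δf * 1) x :=
    ((hasDerivAt_id x).const_mul Δf).add_const Δe
  have h3 := h1.div h2 hv.ne'
  have h4 : HasDerivAt (fun r : ℝ => r / (r - 1)) ((1 * (x - 1) - x * 1) / (x - 1) ^ 2) x :=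
    (hasDerivAt_id x).div ((hasDerivAt_id x).sub_const 1) hx1.ne'
  have h5 := ((h4.log hy).const_mul Δg).const_add Δl
  have h6 := h3.mul h5
  refine h6.congr_deriv ?_
  have hx1' : x - 1 ≠ 0 := hx1.ne'
  have hv' : Δf * x + Δe ≠ 0 := hv.ne'
  simp only [Pi.div_apply]
  field_simp
  ring

/-- The right-hand side `r ↦ J·r(r−1)/(Δᶠr + Δᵉ)·(Δˡ + Δᵍ ln(r/(r−1)))` of the
optimality condition is strictly increasing on `(1, ∞)`, tends to `0` as
`r → 1⁺` and to `∞` as `r → ∞`. -/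
theorem rhs_strict_mono_and_limits (Δf Δe Δl Δg J : ℝ)
    (hf : 0 < Δf) (he : 0 < Δe) (hl : 0 < Δl) (hg : 0 < Δg) (hJ : 0 < J) :
    StrictMonoOn
      (fun r : ℝ => J * (r * (r - 1)) / (Δf * r + Δe)
        * (Δl + Δg * Real.log (r / (r - 1)))) (Ioi 1) ∧
    Tendsto
      (fun r : ℝ => J * (r * (r - 1)) / (Δf * r + Δe)
        * (Δl + Δg * Real.log (r / (r - 1)))) (nhdsWithin 1 (Ioi 1)) (nhds 0) ∧
    Tendsto
      (fun r : ℝ => J * (r * (r - 1)) / (Δf * r + Δe)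
        * (Δl + Δg * Real.log (r / (r - 1)))) atTop atTop := by
  set F : ℝ → ℝ := fun r : ℝ => J * (r * (r - 1)) / (Δf * r + Δe)
      * (Δl + Δg * Real.log (r / (r - 1))) with hF
  refine ⟨?_, ?_, ?_⟩
  · -- strict monotonicity
    apply strictMonoOn_of_deriv_pos (convex_Ioi 1)
    · intro x hx
      exact (rhs_hasDerivAt Δf Δe Δl Δg J hf he hx).continuousAt.continuousWithinAt
    · intro x hx
      rw [interior_Ioi] at hx
      rw [(rhs_hasDerivAt Δf Δe Δl Δg J hf he hx).deriv]
      have hx' : (1:ℝ) < x := hx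
      have hx0 : (0:ℝ) < x := lt_trans one_pos hx'
      have hx1 : (0:ℝ) < x - 1 := by linarith
      have hv : (0:ℝ) < Δf * x + Δe := by positivity
      have hy1 : (1:ℝ) < x / (x - 1) := (one_lt_div hx1).2 (by linarith)
      -- log (x/(x-1)) > 1/x
      have hL : 1 / x < Real.log (x / (x - 1)) := by
        have h := Real.log_lt_sub_one_of_pos
          (x := (x - 1) / x) (by positivity) (by
            intro h
            rw [div_eq_one_iff_eq hx0.ne'] at h
            linarith)
        have hinv : Real.log ((x - 1) / x) = - Real.log (x / (x - 1)) := by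
          rw [← Real.log_inv]
          congr 1
          field_simp
        rw [hinv] at h
        have : (x - 1) / x - 1 = -(1 / x) := by field_simp; ring
        rw [this] at h
        linarith
      have hLx : 1 < Real.log (x / (x - 1)) * x := by
        rw [div_lt_iff₀ hx0] at hL
        linarith
      have hP : (0:ℝ) < Δf * x ^ 2 + 2 * Δe * x - Δe := by nlinarith
      have key : Δg * (Δf * x + Δe) <
          (Δf * x ^ 2 + 2 * Δe * x - Δe) * (Δg * Real.log (x / (x - 1))) := by
        have key' : Δg * (Δf * x + Δe) * x <
            (Δf * x ^ 2 + 2 * Δe * x - Δe) * (Δg * Real.log (x / (x - 1))) * x := by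
          nlinarith [mul_pos hg hP, mul_lt_mul_of_pos_left hLx (mul_pos hg hP),
            mul_pos (mul_pos hg he) hx1]
        exact lt_of_mul_lt_mul_right key' hx0.le
      have hbr : 0 < (Δf * x ^ 2 + 2 * Δe * x - Δe)
          * (Δl + Δg * Real.log (x / (x - 1))) - Δg * (Δf * x + Δe) := by
        have h1 : 0 < (Δf * x ^ 2 + 2 * Δe * x - Δe) * Δl := mul_pos hP hl
        nlinarith [key]
      positivity
  · -- limit at 1⁺
    set G : ℝ → ℝ := fun r => (J * r / (Δf * r + Δe)) *
        ((r - 1) * Δl + Δg * ((r - 1) * Real.log r - (r - 1) * Real.log (r - 1))) with hG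
    have hGc : ContinuousAt G 1 := by
      have hv : Δf * (1:ℝ) + Δe ≠ 0 := by positivity
      have hml : Continuous fun r : ℝ => (r - 1) * Real.log (r - 1) :=
        Real.continuous_mul_log.comp (continuous_id.sub continuous_const)
      apply ContinuousAt.mul
      · exact ((continuousAt_const.mul continuousAt_id).div
          (by fun_prop) hv)
      · apply ContinuousAt.add
        · fun_prop
        · apply ContinuousAt.mul continuousAt_const
          apply ContinuousAt.sub
          · exact ((continuousAt_id.sub continuousAt_const).mul
              (Real.continuousAt_log one_ne_zero))
          · exact hml.continuousAt
      done
    have hG1 : G 1 = 0 := by simp [hG]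
    have hT : Tendsto G (nhdsWithin 1 (Ioi 1)) (nhds 0) := by
      rw [← hG1]
      exact (hGc.continuousWithinAt).tendsto
    refine hT.congr' ?_
    filter_upwards [self_mem_nhdsWithin] with r hr
    have hr1 : (1:ℝ) < r := hr
    have hr0 : (0:ℝ) < r := lt_trans one_pos hr1
    have hrm : (0:ℝ) < r - 1 := by linarith
    have hv : Δf * r + Δe ≠ 0 := by positivity
    have hlog : Real.log (r / (r - 1)) = Real.log r - Real.log (r - 1) :=
      Real.log_div hr0.ne' hrm.ne'
    simp only [hG, hF, hlog]
    field_simp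
  · -- limit at ∞
    have hc : (0:ℝ) < J * Δl / (Δf + Δe) := by positivity
    have hlin : Tendsto (fun r : ℝ => J * Δl / (Δf + Δe) * (r - 1)) atTop atTop := by
      apply Tendsto.const_mul_atTop hc
      exact tendsto_atTop_add_const_right atTop (-1) tendsto_id
    apply tendsto_atTop_mono' atTop ?_ hlin
    filter_upwards [eventually_ge_atTop (2:ℝ)] with r hr
    have hr1 : (1:ℝ) < r := by linarith
    have hr0 : (0:ℝ) < r := by linarith
    have hrm : (0:ℝ) < r - 1 := by linarith
    have hv : (0:ℝ) < Δf * r + Δe := by positivity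
    have hLnn : 0 ≤ Real.log (r / (r - 1)) :=
      Real.log_nonneg ((one_le_div hrm).2 (by linarith))
    have hA : 0 ≤ J * (r * (r - 1)) / (Δf * r + Δe) := by positivity
    have step1 : J * (r * (r - 1)) / (Δf * r + Δe) * Δl ≤ F r := by
      simp only [hF]
      gcongr
      nlinarith [mul_nonneg hg.le hLnn]
    have step2 : J * Δl / (Δf + Δe) * (r - 1) ≤ J * (r * (r - 1)) / (Δf * r + Δe) * Δl := by
      rw [div_mul_eq_mul_div, div_mul_eq_mul_div, div_le_div_iff₀ (by positivity) hv]
      nlinarith [mul_nonneg (mul_nonneg (mul_nonneg hJ.le hl.le) hrm.le)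
        (mul_nonneg he.le hrm.le)]
    linarith
end

section
/- Fix positive constants Δ^f, Δ^e, Δ^l, Δ^g and J > 0. For every k > 0 there exists a unique r > 1 satisfying k(Δ^e k + Δ^g J)/(Δ^f k + Δ^l J) = J r(r−1)/(Δ^f r + Δ^e)·(Δ^l + Δ^g ln(r/(r−1))), and the resulting map k ↦ r(k) is strictly increasing. -/
open Real Set Filter Topology

section aux
variable {Δf Δe Δl Δg J : ℝ}

-- log r - log (r-1) > 1/r for r > 1
lemma log_gap (r : ℝ) (hr : 1 < r) : 1/r < Real.log r - Real.log (r-1) := by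
  have h0 : (0:ℝ) < r := by linarith
  have h1 : (0:ℝ) < r - 1 := by linarith
  have hx : (0:ℝ) < (r-1)/r := by positivity
  have hx1 : (r-1)/r ≠ 1 :=
    ne_of_lt ((div_lt_one h0).mpr (by linarith))
  have := Real.log_lt_sub_one_of_pos hx hx1
  rw [Real.log_div h1.ne' h0.ne'] at this
  have : Real.log (r-1) - Real.log r < (r-1)/r - 1 := this
  have hieq : (r-1)/r - 1 = -(1/r) := by field_simp; ring
  rw [hieq] at this
  linarith

lemma hasDeriv_R (hf : 0 < Δf) (he : 0 < Δe) (r : ℝ) (hr : 1 < r) :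
    HasDerivAt (fun r : ℝ => J * (r * (r - 1)) / (Δf * r + Δe) *
      (Δl + Δg * (Real.log r - Real.log (r-1))))
      (((J * (2*r-1)) * (Δf * r + Δe) - J * (r*(r-1)) * Δf) / (Δf * r + Δe)^2 *
        (Δl + Δg * (Real.log r - Real.log (r-1))) +
       J * (r * (r - 1)) / (Δf * r + Δe) * (Δg * (r⁻¹ - (r-1)⁻¹))) r := by
  have h0 : (0:ℝ) < r := by linarith
  have h1 : (0:ℝ) < r - 1 := by linarith
  have hd0 : Δf * r + Δe ≠ 0 := by positivity
  have hn : HasDerivAt (fun r : ℝ => J * (r * (r-1))) (J * (2*r-1)) r := by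
    have : HasDerivAt (fun r : ℝ => r * (r-1)) (1 * (r-1) + r * 1) r :=
      (hasDerivAt_id r).mul ((hasDerivAt_id r).sub_const 1)
    have h2 := this.const_mul J
    have e : J * (2*r-1) = J * (1 * (r-1) + r * 1) := by ring
    rw [e]; exact h2
  have hden : HasDerivAt (fun r : ℝ => Δf * r + Δe) Δf r := by
    simpa using ((hasDerivAt_id r).const_mul Δf).add_const Δe
  have hq := hn.div hden hd0
  have hlog1 : HasDerivAt (fun r : ℝ => Real.log r) r⁻¹ r := Real.hasDerivAt_log h0.ne'
  have hlog2 : HasDerivAt (fun r : ℝ => Real.log (r-1)) (r-1)⁻¹ r := by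
    have := (Real.hasDerivAt_log h1.ne').comp r ((hasDerivAt_id r).sub_const 1)
    simp at this; exact this
  have hv : HasDerivAt (fun r : ℝ => Δl + Δg * (Real.log r - Real.log (r-1)))
      (Δg * (r⁻¹ - (r-1)⁻¹)) r := by
    simpa using (((hlog1.sub hlog2).const_mul Δg).const_add Δl)
  exact hq.mul hv

lemma deriv_pos (hf : 0 < Δf) (he : 0 < Δe) (hl : 0 < Δl) (hg : 0 < Δg) (hJ : 0 < J)
    (r : ℝ) (hr : 1 < r) :
    0 < ((J * (2*r-1)) * (Δf * r + Δe) - J * (r*(r-1)) * Δf) / (Δf * r + Δe)^2 *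
        (Δl + Δg * (Real.log r - Real.log (r-1))) +
       J * (r * (r - 1)) / (Δf * r + Δe) * (Δg * (r⁻¹ - (r-1)⁻¹)) := by
  have h0 : (0:ℝ) < r := by linarith
  have h1 : (0:ℝ) < r - 1 := by linarith
  have hd : (0:ℝ) < Δf * r + Δe := by positivity
  set L := Real.log r - Real.log (r-1) with hL
  have hLgt : 1/r < L := log_gap r hr
  have key : ((J * (2*r-1)) * (Δf * r + Δe) - J * (r*(r-1)) * Δf) / (Δf * r + Δe)^2 *
        (Δl + Δg * L) + J * (r * (r - 1)) / (Δf * r + Δe) * (Δg * (r⁻¹ - (r-1)⁻¹))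
      = J * ((Δf*r^2 + 2*Δe*r - Δe) * (Δl + Δg * L) - Δg * (Δf * r + Δe)) / (Δf * r + Δe)^2 := by
    field_simp
    ring
  rw [key]
  have hA : (0:ℝ) < Δf*r^2 + 2*Δe*r - Δe := by nlinarith
  have hnum : 0 < (Δf*r^2 + 2*Δe*r - Δe) * (Δl + Δg * L) - Δg * (Δf * r + Δe) := by
    have h2 : (Δf*r^2 + 2*Δe*r - Δe) * (Δg * (1/r)) > Δg * (Δf * r + Δe) * 1 := by
      rw [gt_iff_lt, ]
      have : (Δf*r^2 + 2*Δe*r - Δe) * (Δg * (1/r)) = Δg * (Δf*r + 2*Δe - Δe/r) := by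
        field_simp
      rw [this]
      have : Δe / r < Δe := by
        rw [div_lt_iff₀ h0]; nlinarith
      nlinarith
    nlinarith [mul_lt_mul_of_pos_left hLgt (mul_pos hg hA), mul_pos hA hl, h2]
  positivity

end aux

section aux2
variable {Δf Δe Δl Δg J : ℝ}

lemma R_eqOn (hf : 0 < Δf) (he : 0 < Δe) :
    Set.EqOn (fun r : ℝ => J * (r * (r - 1)) / (Δf * r + Δe) *
        (Δl + Δg * Real.log (r / (r - 1))))
      (fun r : ℝ => J * (r * (r - 1)) / (Δf * r + Δe) *
        (Δl + Δg * (Real.log r - Real.log (r-1)))) (Set.Ioi 1) := by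
  intro r hr
  simp only [Set.mem_Ioi] at hr
  have h0 : (0:ℝ) < r := by linarith
  have h1 : (0:ℝ) < r - 1 := by linarith
  simp only [Real.log_div h0.ne' h1.ne']

lemma R_strictMono (hf : 0 < Δf) (he : 0 < Δe) (hl : 0 < Δl) (hg : 0 < Δg) (hJ : 0 < J) :
    StrictMonoOn (fun r : ℝ => J * (r * (r - 1)) / (Δf * r + Δe) *
        (Δl + Δg * Real.log (r / (r - 1)))) (Set.Ioi 1) := by
  have hmono : StrictMonoOn (fun r : ℝ => J * (r * (r - 1)) / (Δf * r + Δe) *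
      (Δl + Δg * (Real.log r - Real.log (r-1)))) (Set.Ioi 1) := by
    apply strictMonoOn_of_deriv_pos (convex_Ioi 1)
    · intro r hr
      simp only [Set.mem_Ioi] at hr
      exact (hasDeriv_R hf he r hr).continuousAt.continuousWithinAt
    · rw [interior_Ioi]
      intro r hr
      rw [(hasDeriv_R hf he r hr).deriv]
      exact deriv_pos hf he hl hg hJ r hr
  exact fun a ha b hb hab => by
    rw [R_eqOn hf he ha, R_eqOn hf he hb]; exact hmono ha hb hab

lemma R_continuousOn (hf : 0 < Δf) (he : 0 < Δe) :
    ContinuousOn (fun r : ℝ => J * (r * (r - 1)) / (Δf * r + Δe) *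
        (Δl + Δg * Real.log (r / (r - 1)))) (Set.Ioi 1) := by
  intro r hr
  simp only [Set.mem_Ioi] at hr
  exact ((hasDeriv_R hf he r hr).continuousAt.continuousWithinAt).congr
    (fun x hx => (R_eqOn hf he hx)) (R_eqOn hf he hr)

lemma R_tendsto_zero (hf : 0 < Δf) (he : 0 < Δe) :
    Filter.Tendsto (fun r : ℝ => J * (r * (r - 1)) / (Δf * r + Δe) *
        (Δl + Δg * Real.log (r / (r - 1)))) (nhdsWithin 1 (Set.Ioi 1)) (nhds 0) := by
  -- rewrite on Ioi 1 as product form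
  have hsub : Filter.Tendsto (fun r : ℝ => r - 1) (nhdsWithin 1 (Set.Ioi 1))
      (nhdsWithin 0 (Set.Ioi 0)) := by
    apply tendsto_nhdsWithin_of_tendsto_nhds_of_eventually_within
    · have : Filter.Tendsto (fun r : ℝ => r - 1) (nhds 1) (nhds 0) := by
        simpa using (Filter.tendsto_id (x := 𝓝 (1:ℝ))).sub_const 1
      exact this.mono_left nhdsWithin_le_nhds
    · filter_upwards [self_mem_nhdsWithin] with r hr
      simp only [Set.mem_Ioi] at hr ⊢
      linarith
  have hxlogx : Filter.Tendsto (fun t : ℝ => Real.log t * t) (nhdsWithin 0 (Set.Ioi 0)) (nhds 0) := by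
    have := tendsto_log_mul_rpow_nhdsGT_zero (r := 1) one_pos
    simpa using this
  have h1 : Filter.Tendsto (fun r : ℝ => Real.log (r-1) * (r-1))
      (nhdsWithin 1 (Set.Ioi 1)) (nhds 0) := hxlogx.comp hsub
  -- main: F r = (J * r / (Δf r + Δe)) * (Δl*(r-1) + Δg*((r-1)*log r - log(r-1)*(r-1)))
  have hF : Filter.Tendsto (fun r : ℝ => (J * r / (Δf * r + Δe)) *
      (Δl*(r-1) + Δg*((r-1)*Real.log r - Real.log (r-1)*(r-1))))
      (nhdsWithin 1 (Set.Ioi 1)) (nhds 0) := by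
    have hd1 : Δf * 1 + Δe ≠ 0 := by positivity
    have ha : Filter.Tendsto (fun r : ℝ => J * r / (Δf * r + Δe)) (nhds 1)
        (nhds (J * 1 / (Δf * 1 + Δe))) := by
      exact ((continuous_const.mul continuous_id).tendsto 1).div
        (((continuous_const.mul continuous_id).add continuous_const).tendsto 1) hd1
    have hb : Filter.Tendsto (fun r : ℝ => Δl*(r-1) + Δg*((r-1)*Real.log r - Real.log (r-1)*(r-1)))
        (nhdsWithin 1 (Set.Ioi 1)) (nhds 0) := by
      have t1 : Filter.Tendsto (fun r : ℝ => Δl*(r-1)) (nhdsWithin 1 (Set.Ioi 1)) (nhds 0) := by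
        have : Filter.Tendsto (fun r : ℝ => Δl*(r-1)) (nhds 1) (nhds (Δl*(1-1))) :=
          (continuous_const.mul (continuous_id.sub continuous_const)).tendsto 1
        simpa using this.mono_left nhdsWithin_le_nhds
      have t2 : Filter.Tendsto (fun r : ℝ => (r-1)*Real.log r) (nhdsWithin 1 (Set.Ioi 1)) (nhds 0) := by
        have : Filter.Tendsto (fun r : ℝ => (r-1)*Real.log r) (nhds 1)
            (nhds ((1-1)*Real.log 1)) := by
          exact ((continuous_id.sub continuous_const).tendsto 1).mul
            ((Real.continuousAt_log (by norm_num)).tendsto)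
        simpa using this.mono_left nhdsWithin_le_nhds
      have := t1.add ((t2.sub h1).const_mul Δg)
      simpa using this
    have := (ha.mono_left nhdsWithin_le_nhds).mul hb
    simpa using this
  refine hF.congr' ?_
  filter_upwards [self_mem_nhdsWithin] with r hr
  simp only [Set.mem_Ioi] at hr
  have h0 : (0:ℝ) < r := by linarith
  have h1' : (0:ℝ) < r - 1 := by linarith
  have hd : (Δf * r + Δe) ≠ 0 := by positivity
  rw [Real.log_div h0.ne' h1'.ne']
  field_simp

lemma L_strictMono (hf : 0 < Δf) (he : 0 < Δe) (hl : 0 < Δl) (hg : 0 < Δg) (hJ : 0 < J)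
    {k₁ k₂ : ℝ} (h1 : 0 < k₁) (h12 : k₁ < k₂) :
    k₁ * (Δe * k₁ + Δg * J) / (Δf * k₁ + Δl * J) <
      k₂ * (Δe * k₂ + Δg * J) / (Δf * k₂ + Δl * J) := by
  have h2 : 0 < k₂ := by linarith
  have hd1 : 0 < Δf * k₁ + Δl * J := by positivity
  have hd2 : 0 < Δf * k₂ + Δl * J := by positivity
  rw [div_lt_div_iff₀ hd1 hd2]
  nlinarith [mul_pos h1 h2, mul_pos (mul_pos he hf) (mul_pos h1 (mul_pos h2 (sub_pos.mpr h12))),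
    mul_pos (mul_pos he hl) (mul_pos hJ (mul_pos (add_pos h1 h2) (sub_pos.mpr h12))),
    mul_pos (mul_pos hg hl) (mul_pos (mul_pos hJ hJ) (sub_pos.mpr h12))]

end aux2

/-- For every `k > 0` the optimality condition (Eq. 5) has a unique solution
`r > 1`, and the implicit map `k ↦ r(k)` is strictly increasing. -/
theorem optimality_condition_implicit_function (Δf Δe Δl Δg J : ℝ)
    (hf : 0 < Δf) (he : 0 < Δe) (hl : 0 < Δl) (hg : 0 < Δg) (hJ : 0 < J) :
    (∀ k : ℝ, 0 < k → ∃! r : ℝ, 1 < r ∧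
      k * (Δe * k + Δg * J) / (Δf * k + Δl * J) =
        J * (r * (r - 1)) / (Δf * r + Δe) * (Δl + Δg * Real.log (r / (r - 1)))) ∧
    (∀ k₁ k₂ r₁ r₂ : ℝ, 0 < k₁ → k₁ < k₂ → 1 < r₁ → 1 < r₂ →
      k₁ * (Δe * k₁ + Δg * J) / (Δf * k₁ + Δl * J) =
        J * (r₁ * (r₁ - 1)) / (Δf * r₁ + Δe) * (Δl + Δg * Real.log (r₁ / (r₁ - 1))) →
      k₂ * (Δe * k₂ + Δg * J) / (Δf * k₂ + Δl * J) =
        J * (r₂ * (r₂ - 1)) / (Δf * r₂ + Δe) * (Δl + Δg * Real.log (r₂ / (r₂ - 1))) →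
      r₁ < r₂) := by
  set R : ℝ → ℝ := fun r => J * (r * (r - 1)) / (Δf * r + Δe) *
      (Δl + Δg * Real.log (r / (r - 1))) with hR
  have hmono : StrictMonoOn R (Set.Ioi 1) := R_strictMono hf he hl hg hJ
  constructor
  · intro k hk
    set c : ℝ := k * (Δe * k + Δg * J) / (Δf * k + Δl * J) with hc
    have hcpos : 0 < c := by
      have : 0 < Δf * k + Δl * J := by positivity
      positivity
    -- lower point
    have hev : ∀ᶠ r in nhdsWithin 1 (Set.Ioi 1), R r < c :=
      (R_tendsto_zero hf he).eventually (eventually_lt_nhds hcpos)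
    obtain ⟨a, haR, ha1⟩ := (hev.and self_mem_nhdsWithin).exists
    -- upper point
    set b : ℝ := max (a+1) (c*(Δf+Δe)/(J*Δl) + 2) with hb
    have hab : a ≤ b := le_trans (by linarith) (le_max_left _ _)
    have hb1 : 1 < b := by linarith [le_max_left (a+1) (c*(Δf+Δe)/(J*Δl) + 2)]
    have hbge : c*(Δf+Δe)/(J*Δl) + 2 ≤ b := le_max_right _ _
    have hJl : (0:ℝ) < J * Δl := by positivity
    have hb2 : c*(Δf+Δe) + J*Δl ≤ (b-1) * (J*Δl) := by
      have h1 : c*(Δf+Δe)/(J*Δl) + 1 ≤ b - 1 := by linarith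
      have := mul_le_mul_of_nonneg_right h1 (le_of_lt hJl)
      calc c*(Δf+Δe) + J*Δl = (c*(Δf+Δe)/(J*Δl)) * (J*Δl) + 1 * (J*Δl) := by
            rw [div_mul_cancel₀ _ hJl.ne']; ring
        _ = (c*(Δf+Δe)/(J*Δl) + 1) * (J*Δl) := by ring
        _ ≤ (b-1) * (J*Δl) := this
    have hRb : c < R b := by
      have hb0 : (0:ℝ) < b := by linarith
      have hb1' : (0:ℝ) < b - 1 := by linarith
      have hd : (0:ℝ) < Δf * b + Δe := by positivity
      have hq : (0:ℝ) < J * (b * (b - 1)) / (Δf * b + Δe) := by positivity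
      have hlog : 0 ≤ Real.log (b / (b-1)) := by
        apply Real.log_nonneg
        rw [le_div_iff₀ hb1']; linarith
      have h1 : c < J * (b * (b - 1)) / (Δf * b + Δe) * Δl := by
        rw [div_mul_eq_mul_div, lt_div_iff₀ hd]
        nlinarith [mul_le_mul_of_nonneg_left hb2 hb0.le, mul_nonneg (mul_nonneg hcpos.le he.le) hb1'.le, mul_pos hb0 hJl]
      calc c < J * (b * (b - 1)) / (Δf * b + Δe) * Δl := h1
        _ ≤ R b := by
          apply mul_le_mul_of_nonneg_left _ hq.le
          nlinarith [mul_nonneg hg.le hlog]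
    -- IVT
    have hsub : Set.Icc a b ⊆ Set.Ioi 1 := fun x hx => lt_of_lt_of_le ha1 hx.1
    have hcont : ContinuousOn R (Set.Icc a b) := (R_continuousOn hf he).mono hsub
    have hmem : c ∈ Set.Icc (R a) (R b) := ⟨haR.le, hRb.le⟩
    obtain ⟨r, hrmem, hrc⟩ := intermediate_value_Icc hab hcont hmem
    have hr1 : 1 < r := lt_of_lt_of_le ha1 hrmem.1
    refine ⟨r, ⟨hr1, hrc.symm⟩, ?_⟩
    rintro y ⟨hy1, hyc⟩
    exact hmono.injOn (Set.mem_Ioi.mpr hy1) (Set.mem_Ioi.mpr hr1) (hyc.symm.trans hrc.symm)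
  · intro k₁ k₂ r₁ r₂ hk1 hk12 hr1 hr2 he1 he2
    have hL : k₁ * (Δe * k₁ + Δg * J) / (Δf * k₁ + Δl * J) <
        k₂ * (Δe * k₂ + Δg * J) / (Δf * k₂ + Δl * J) := L_strictMono hf he hl hg hJ hk1 hk12
    have hRR : R r₁ < R r₂ := by rw [hR]; rw [he1, he2] at hL; exact hL
    by_contra hcon
    push_neg at hcon
    rcases eq_or_lt_of_le hcon with h | h
    · rw [h] at hRR; exact lt_irrefl _ hRR
    · exact absurd (hmono (Set.mem_Ioi.mpr hr2) (Set.mem_Ioi.mpr hr1) h) (not_lt.mpr hRR.le)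
end
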